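/- Let A be a Noetherian ring, flat over a complete discrete valuation ring O_K with uniformizer π_K, such that A[1/π_K] is normal and A/π_K A is reduced. Then A is normal (i.e. integrally closed in its total ring of fractions). -/

import Mathlib

/-- Let `A` be a Noetherian ring, flat over a complete discrete
valuation ring `O_K` with uniformizer `π`, such that `A[1/π]` is normal and
`A/πA` is reduced.  Then `A` is normal (integrally closed in its total ring of
fractions). -/
theorem stmt_0
    {O : Type*} [CommRing O] [IsDomain O] [IsDiscreteValuationRing O]
    [IsAdicComplete (IsLocalRing.maximalIdeal O) O]
    (π : O) (hπ : Irreducible π)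
    {A : Type*} [CommRing A] [IsNoetherianRing A] [Algebra O A]
    [Module.Flat O A]
    (hnormal : IsIntegrallyClosed (Localization.Away (algebraMap O A π)))
    (hreduced : IsReduced (A ⧸ Ideal.span {algebraMap O A π})) :
    IsIntegrallyClosed A := by
  classical
  set p : A := algebraMap O A π with hp
  -- π acts regularly on A by flatness
  have hregO : IsSMulRegular O π := by
    intro a b hab
    simpa only [smul_eq_mul] using mul_left_cancel₀ hπ.ne_zero hab
  have hregA : IsSMulRegular A π := by
    have h1 : IsSMulRegular (TensorProduct O O A) π := hregO.rTensor A
    exact h1.of_injective (TensorProduct.lid O A).symm.toLinearMap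
      (TensorProduct.lid O A).symm.injective
  have hreg : p ∈ nonZeroDivisors A := by
    rw [mem_nonZeroDivisors_iff_right]
    intro x hx
    have h0 : π • x = π • (0 : A) := by
      rw [smul_zero, Algebra.smul_def, ← hp, mul_comm]; exact hx
    exact hregA h0
  have hle : Submonoid.powers p ≤ nonZeroDivisors A := Submonoid.powers_le.mpr hreg
  set K := FractionRing A
  set Loc := Localization.Away p
  letI : Algebra Loc K :=
    IsLocalization.localizationAlgebraOfSubmonoidLe Loc K (Submonoid.powers p)
      (nonZeroDivisors A) hle
  haveI : IsScalarTower A Loc K :=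
    IsLocalization.localization_isScalarTower_of_submonoid_le Loc K (Submonoid.powers p)
      (nonZeroDivisors A) hle
  haveI : IsFractionRing Loc K :=
    IsFractionRing.isFractionRing_of_isLocalization (Submonoid.powers p) Loc K hle
  rw [isIntegrallyClosed_iff K]
  intro x hx
  -- x lies in the localization away from p
  have hx' : IsIntegral Loc x := hx.tower_top
  obtain ⟨y, hy⟩ := (isIntegrallyClosed_iff (R := Loc) K).mp hnormal hx'
  obtain ⟨⟨a, s⟩, hs⟩ := IsLocalization.surj (Submonoid.powers p) y
  obtain ⟨n, hn⟩ := s.prop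
  have key : ∀ (n : ℕ) (a : A),
      algebraMap A K a = algebraMap A K p ^ n * x → ∃ y, algebraMap A K y = x := by
    intro n
    induction n with
    | zero => intro a ha; exact ⟨a, by simpa using ha⟩
    | succ n ih =>
      intro a ha
      obtain ⟨q, hq_monic, hq⟩ := hx
      set s : A := p ^ (n + 1) with hsdef
      -- `a` is a root of the scaled polynomial
      have h1 : Polynomial.eval₂ (algebraMap A K) (algebraMap A K a)
          (q.scaleRoots s) = 0 := by
        have := Polynomial.scaleRoots_eval₂_eq_zero (algebraMap A K) (s := s) hq
        rwa [show (algebraMap A K) s * x = algebraMap A K a by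
          rw [hsdef, map_pow]; exact ha.symm] at this
      have h2 : (q.scaleRoots s).eval a = 0 := by
        have := (Polynomial.eval₂_at_apply (algebraMap A K) a (p := q.scaleRoots s)).symm.trans h1
        exact IsFractionRing.injective A K (by simpa using this)
      -- reduce modulo p : `a` is nilpotent there
      set I : Ideal A := Ideal.span {p} with hI
      have h3 : (q.scaleRoots s).map (Ideal.Quotient.mk I) =
          Polynomial.X ^ q.natDegree := by
        ext i
        rw [Polynomial.coeff_map, Polynomial.coeff_scaleRoots, Polynomial.coeff_X_pow]
        rcases lt_trichotomy i q.natDegree with h | h | h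
        · have : (Ideal.Quotient.mk I) s = 0 := by
            rw [Ideal.Quotient.eq_zero_iff_mem, hI, Ideal.mem_span_singleton]
            exact dvd_pow_self p n.succ_ne_zero
          rw [map_mul, map_pow, this, zero_pow (by omega), mul_zero, if_neg h.ne]
        · subst h
          rw [Nat.sub_self, pow_zero, mul_one, if_pos rfl, ← Polynomial.leadingCoeff,
            hq_monic.leadingCoeff, map_one]
        · rw [Polynomial.coeff_eq_zero_of_natDegree_lt h, zero_mul, map_zero, if_neg h.ne']
      have h4 : (Ideal.Quotient.mk I a) ^ q.natDegree = 0 := by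
        have := congrArg (Ideal.Quotient.mk I) h2
        rw [map_zero, ← Polynomial.eval₂_at_apply, Polynomial.eval₂_eq_eval_map, h3] at this
        simpa using this
      have h5 : (Ideal.Quotient.mk I) a = 0 :=
        hreduced.eq_zero _ ⟨q.natDegree, h4⟩
      rw [Ideal.Quotient.eq_zero_iff_mem, hI, Ideal.mem_span_singleton'] at h5
      obtain ⟨b, hb⟩ := h5
      refine ih b ?_
      have hu : IsUnit (algebraMap A K p) := IsLocalization.map_units K ⟨p, hreg⟩
      apply hu.mul_left_cancel
      rw [← map_mul, mul_comm p b, hb, ha, pow_succ]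
      ring
  refine key n a ?_
  have hn' : (s : A) = p ^ n := hn.symm
  have h6 := congrArg (algebraMap Loc K) hs
  rw [map_mul, ← IsScalarTower.algebraMap_apply, ← IsScalarTower.algebraMap_apply, hy] at h6
  rw [hn', map_pow] at h6
  exact h6.symm.trans (mul_comm _ _)
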